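/- arXiv:1401.4189 — 5 statements merged into one kernel-verified Lean document; each statement's English description precedes it below -/
import Mathlib

section
/- Let U, X1, X2, V2, Y be random variables on finite alphabets such that p(u,v2|x1,x2)=p(u|x1)p(v2|x2) and Y=f(U,V2) for a deterministic function f. Then I(X1,X2;Y|U) ≤ I(X2;V2). -/
open scoped BigOperators

/-- Shannon entropy of a finitely-supported distribution (convention 0·log 0 = 0 via `Real.log 0 = 0`). -/
noncomputable def ent {Ω : Type*} [Fintype Ω] (p : Ω → ℝ) : ℝ :=
  -∑ ω, p ω * Real.log (p ω)

/-- Marginal (pushforward) of a joint distribution `p` along a map `f`. -/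
noncomputable def marg {Ω S : Type*} [Fintype Ω] [Fintype S] [DecidableEq S]
    (p : Ω → ℝ) (f : Ω → S) : S → ℝ :=
  fun s => ∑ ω, if f ω = s then p ω else 0

/-- Mutual information I(fA; fB) under the joint distribution `p`. -/
noncomputable def MI {Ω A B : Type*} [Fintype Ω] [Fintype A] [Fintype B]
    [DecidableEq A] [DecidableEq B] (p : Ω → ℝ) (fA : Ω → A) (fB : Ω → B) : ℝ :=
  ent (marg p fA) + ent (marg p fB) - ent (marg p (fun ω => (fA ω, fB ω)))

/-- Conditional mutual information I(fA; fB | fC) under the joint distribution `p`. -/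
noncomputable def CMI {Ω A B C : Type*} [Fintype Ω] [Fintype A] [Fintype B] [Fintype C]
    [DecidableEq A] [DecidableEq B] [DecidableEq C]
    (p : Ω → ℝ) (fA : Ω → A) (fB : Ω → B) (fC : Ω → C) : ℝ :=
  ent (marg p (fun ω => (fA ω, fC ω))) + ent (marg p (fun ω => (fB ω, fC ω)))
    - ent (marg p fC) - ent (marg p (fun ω => (fA ω, fB ω, fC ω)))

section Infra
variable {Ω S T : Type*} [Fintype Ω] [Fintype S] [Fintype T] [DecidableEq S] [DecidableEq T]

lemma marg_nonneg (p : Ω → ℝ) (h0 : ∀ ω, 0 ≤ p ω) (g : Ω → S) (s : S) : 0 ≤ marg p g s := by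
  unfold marg
  refine Finset.sum_nonneg fun ω _ => ?_
  split
  · exact h0 ω
  · exact le_rfl

lemma sum_marg (p : Ω → ℝ) (g : Ω → S) : ∑ s, marg p g s = ∑ ω, p ω := by
  unfold marg
  rw [Finset.sum_comm]
  simp [Finset.sum_ite_eq]

lemma sum_comp (p : Ω → ℝ) (g : Ω → S) (F : S → ℝ) :
    ∑ s, marg p g s * F s = ∑ ω, p ω * F (g ω) := by
  unfold marg
  simp_rw [Finset.sum_mul, ite_mul, zero_mul]
  rw [Finset.sum_comm]
  simp [Finset.sum_ite_eq]

lemma ent_eq (p : Ω → ℝ) (g : Ω → S) :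
    ent (marg p g) = -∑ ω, p ω * Real.log (marg p g (g ω)) := by
  unfold ent
  rw [sum_comp p g (fun s => Real.log (marg p g s))]

lemma le_marg (p : Ω → ℝ) (h0 : ∀ ω, 0 ≤ p ω) (g : Ω → S) (ω0 : Ω) :
    p ω0 ≤ marg p g (g ω0) := by
  unfold marg
  have h : ∀ ω ∈ Finset.univ, 0 ≤ (if g ω = g ω0 then p ω else 0) := by
    intro ω _
    split
    · exact h0 ω
    · exact le_rfl
  have := Finset.single_le_sum h (Finset.mem_univ ω0)
  simpa using this

lemma marg_pos (p : Ω → ℝ) (h0 : ∀ ω, 0 ≤ p ω) (g : Ω → S) (ω0 : Ω) (hne : p ω0 ≠ 0) :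
    0 < marg p g (g ω0) :=
  lt_of_lt_of_le (lt_of_le_of_ne (h0 ω0) (Ne.symm hne)) (le_marg p h0 g ω0)

lemma sum_marg_fst {A : Type*} [Fintype A] [DecidableEq A]
    (p : Ω → ℝ) (g : Ω → A) (c : Ω → S) (γ : S) :
    ∑ α, marg p (fun ω => (g ω, c ω)) (α, γ) = marg p c γ := by
  unfold marg
  rw [Finset.sum_comm]
  refine Finset.sum_congr rfl fun ω _ => ?_
  simp [Prod.mk.injEq, ite_and, Finset.sum_ite_eq]

lemma marg_comp_eq (p : Ω → ℝ) (g : Ω → S) (g' : Ω → T) (e : S → T)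
    (h : ∀ ω, p ω ≠ 0 → g' ω = e (g ω)) :
    marg p g' = marg (marg p g) e := by
  funext t
  unfold marg
  have rhs : ∑ s, (if e s = t then (∑ ω, if g ω = s then p ω else 0) else 0)
      = ∑ ω, (if e (g ω) = t then p ω else 0) := by
    have : ∀ s, (if e s = t then (∑ ω, if g ω = s then p ω else 0) else 0)
        = ∑ ω, (if g ω = s then (if e s = t then p ω else 0) else 0) := by
      intro s; split_ifs with hs
      · simp [hs]
      · simp [hs]
    rw [Finset.sum_congr rfl fun s _ => this s, Finset.sum_comm]
    refine Finset.sum_congr rfl fun ω _ => ?_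
    simp [Finset.sum_ite_eq]
  rw [rhs]
  refine Finset.sum_congr rfl fun ω _ => ?_
  by_cases hω : p ω = 0
  · simp [hω]
  · rw [h ω hω]

lemma ent_marg_inj (μ : S → ℝ) (e : S → T) (he : Function.Injective e) :
    ent (marg μ e) = ent μ := by
  unfold ent
  congr 1
  have key : ∀ s, marg μ e (e s) = μ s := by
    intro s
    unfold marg
    simp [he.eq_iff, Finset.sum_ite_eq']
  have h0 : ∀ t ∉ Finset.image e Finset.univ, marg μ e t = 0 := by
    intro t ht
    refine Finset.sum_eq_zero fun ω _ => ?_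
    have : e ω ≠ t := fun h => ht (h ▸ Finset.mem_image_of_mem e (Finset.mem_univ ω))
    simp [this]
  calc ∑ t, marg μ e t * Real.log (marg μ e t)
      = ∑ t ∈ Finset.image e Finset.univ, marg μ e t * Real.log (marg μ e t) :=
        (Finset.sum_subset (Finset.subset_univ _) (fun t _ ht => by rw [h0 t ht]; simp)).symm
    _ = ∑ s, marg μ e (e s) * Real.log (marg μ e (e s)) :=
        Finset.sum_image (fun a _ b _ h => he h)
    _ = ∑ s, μ s * Real.log (μ s) := by simp [key]

lemma ent_eq_of_inj (p : Ω → ℝ) (g : Ω → S) (g' : Ω → T) (e : S → T)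
    (he : Function.Injective e) (h : ∀ ω, p ω ≠ 0 → g' ω = e (g ω)) :
    ent (marg p g') = ent (marg p g) := by
  rw [marg_comp_eq p g g' e h]
  exact ent_marg_inj _ e he

end Infra

section Gibbs
variable {Ω : Type*} [Fintype Ω]

lemma sum_mul_log_le (p P Q : Ω → ℝ) (h0 : ∀ ω, 0 ≤ p ω)
    (hP : ∀ ω, p ω ≠ 0 → 0 < P ω) (hQ : ∀ ω, p ω ≠ 0 → 0 < Q ω)
    (hsum : ∑ ω, p ω * (Q ω / P ω) ≤ ∑ ω, p ω) :
    ∑ ω, p ω * Real.log (Q ω) ≤ ∑ ω, p ω * Real.log (P ω) := by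
  have key : ∀ ω, p ω * Real.log (Q ω) - p ω * Real.log (P ω)
      ≤ p ω * (Q ω / P ω) - p ω := by
    intro ω
    by_cases hω : p ω = 0
    · simp [hω]
    · have hPp := hP ω hω
      have hQp := hQ ω hω
      have hdiv : 0 < Q ω / P ω := div_pos hQp hPp
      have hlog : Real.log (Q ω / P ω) ≤ Q ω / P ω - 1 :=
        Real.log_le_sub_one_of_pos hdiv
      rw [Real.log_div (ne_of_gt hQp) (ne_of_gt hPp)] at hlog
      have hpω : 0 < p ω := lt_of_le_of_ne (h0 ω) (Ne.symm hω)
      nlinarith [mul_le_mul_of_nonneg_left hlog (le_of_lt hpω)]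
  have hs := Finset.sum_le_sum (fun ω (_ : ω ∈ Finset.univ) => key ω)
  rw [Finset.sum_sub_distrib, Finset.sum_sub_distrib] at hs
  linarith
end Gibbs

section NonNeg
variable {Ω A B C S T : Type*} [Fintype Ω] [Fintype A] [Fintype B] [Fintype C]
  [Fintype S] [Fintype T]
  [DecidableEq A] [DecidableEq B] [DecidableEq C] [DecidableEq S] [DecidableEq T]

lemma MI_nonneg' (p : Ω → ℝ) (h0 : ∀ ω, 0 ≤ p ω) (h1 : ∑ ω, p ω = 1)
    (a : Ω → A) (b : Ω → B) :
    ent (marg p (fun ω => (a ω, b ω))) ≤ ent (marg p a) + ent (marg p b) := by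
  set ma := marg p a with hma
  set mb := marg p b with hmb
  set mab := marg p (fun ω => (a ω, b ω)) with hmab
  have hQlog : ∑ ω, p ω * Real.log (ma (a ω) * mb (b ω))
      = ∑ ω, p ω * Real.log (ma (a ω)) + ∑ ω, p ω * Real.log (mb (b ω)) := by
    rw [← Finset.sum_add_distrib]
    refine Finset.sum_congr rfl fun ω _ => ?_
    by_cases hω : p ω = 0
    · simp [hω]
    · have h1' : 0 < ma (a ω) := marg_pos p h0 a ω hω
      have h2' : 0 < mb (b ω) := marg_pos p h0 b ω hω
      rw [Real.log_mul (ne_of_gt h1') (ne_of_gt h2'), mul_add]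
  have main : ∑ ω, p ω * Real.log (ma (a ω) * mb (b ω))
      ≤ ∑ ω, p ω * Real.log (mab (a ω, b ω)) := by
    apply sum_mul_log_le p (fun ω => mab (a ω, b ω)) (fun ω => ma (a ω) * mb (b ω)) h0
    · intro ω hω; exact marg_pos p h0 _ ω hω
    · intro ω hω; exact mul_pos (marg_pos p h0 a ω hω) (marg_pos p h0 b ω hω)
    · have e1 : ∑ ω, p ω * (ma (a ω) * mb (b ω) / mab (a ω, b ω))
          = ∑ t : A × B, mab t * (ma t.1 * mb t.2 / mab t) := by
        rw [sum_comp p (fun ω => (a ω, b ω)) (fun t => ma t.1 * mb t.2 / mab t)]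
      rw [h1]
      rw [show (∑ ω, p ω * ((fun ω => ma (a ω) * mb (b ω)) ω / (fun ω => mab (a ω, b ω)) ω))
            = ∑ ω, p ω * (ma (a ω) * mb (b ω) / mab (a ω, b ω)) from rfl, e1]
      calc ∑ t : A × B, mab t * (ma t.1 * mb t.2 / mab t)
          ≤ ∑ t : A × B, ma t.1 * mb t.2 := by
            refine Finset.sum_le_sum fun t _ => ?_
            by_cases ht : mab t = 0
            · rw [ht, zero_mul]
              exact mul_nonneg (marg_nonneg p h0 a t.1) (marg_nonneg p h0 b t.2)
            · rw [mul_comm, div_mul_cancel₀ _ ht]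
        _ = (∑ s, ma s) * (∑ t, mb t) := by
            rw [Fintype.sum_prod_type, Finset.sum_mul_sum]
        _ = 1 := by rw [hma, hmb, sum_marg, sum_marg, h1, one_mul]
  unfold ent
  rw [sum_comp p a (fun s => Real.log (ma s)), sum_comp p b (fun s => Real.log (mb s)),
    sum_comp p (fun ω => (a ω, b ω)) (fun s => Real.log (mab s))]
  linarith [hQlog, main]

lemma condMI_nonneg (p : Ω → ℝ) (h0 : ∀ ω, 0 ≤ p ω) (h1 : ∑ ω, p ω = 1)
    (a : Ω → A) (b : Ω → B) (c : Ω → C) :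
    ent (marg p (fun ω => (a ω, b ω, c ω))) + ent (marg p c)
      ≤ ent (marg p (fun ω => (a ω, c ω))) + ent (marg p (fun ω => (b ω, c ω))) := by
  set mabc := marg p (fun ω => (a ω, b ω, c ω)) with hmabc
  set mac := marg p (fun ω => (a ω, c ω)) with hmac
  set mbc := marg p (fun ω => (b ω, c ω)) with hmbc
  set mc := marg p c with hmc
  have hQlog : ∑ ω, p ω * Real.log (mac (a ω, c ω) * mbc (b ω, c ω))
      = ∑ ω, p ω * Real.log (mac (a ω, c ω)) + ∑ ω, p ω * Real.log (mbc (b ω, c ω)) := by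
    rw [← Finset.sum_add_distrib]
    refine Finset.sum_congr rfl fun ω _ => ?_
    by_cases hω : p ω = 0
    · simp [hω]
    · have h1' : 0 < mac (a ω, c ω) := marg_pos p h0 _ ω hω
      have h2' : 0 < mbc (b ω, c ω) := marg_pos p h0 _ ω hω
      rw [Real.log_mul (ne_of_gt h1') (ne_of_gt h2'), mul_add]
  have hPlog : ∑ ω, p ω * Real.log (mabc (a ω, b ω, c ω) * mc (c ω))
      = ∑ ω, p ω * Real.log (mabc (a ω, b ω, c ω)) + ∑ ω, p ω * Real.log (mc (c ω)) := by
    rw [← Finset.sum_add_distrib]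
    refine Finset.sum_congr rfl fun ω _ => ?_
    by_cases hω : p ω = 0
    · simp [hω]
    · have h1' : 0 < mabc (a ω, b ω, c ω) := marg_pos p h0 _ ω hω
      have h2' : 0 < mc (c ω) := marg_pos p h0 _ ω hω
      rw [Real.log_mul (ne_of_gt h1') (ne_of_gt h2'), mul_add]
  have main : ∑ ω, p ω * Real.log (mac (a ω, c ω) * mbc (b ω, c ω))
      ≤ ∑ ω, p ω * Real.log (mabc (a ω, b ω, c ω) * mc (c ω)) := by
    apply sum_mul_log_le p (fun ω => mabc (a ω, b ω, c ω) * mc (c ω))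
      (fun ω => mac (a ω, c ω) * mbc (b ω, c ω)) h0
    · intro ω hω; exact mul_pos (marg_pos p h0 _ ω hω) (marg_pos p h0 c ω hω)
    · intro ω hω; exact mul_pos (marg_pos p h0 _ ω hω) (marg_pos p h0 _ ω hω)
    · have e1 : ∑ ω, p ω * (mac (a ω, c ω) * mbc (b ω, c ω) / (mabc (a ω, b ω, c ω) * mc (c ω)))
          = ∑ t : A × B × C, mabc t * (mac (t.1, t.2.2) * mbc t.2 / (mabc t * mc t.2.2)) := by
        rw [sum_comp p (fun ω => (a ω, b ω, c ω))
          (fun t => mac (t.1, t.2.2) * mbc t.2 / (mabc t * mc t.2.2))]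
      rw [h1]
      rw [show (∑ ω, p ω * ((fun ω => mac (a ω, c ω) * mbc (b ω, c ω)) ω
            / (fun ω => mabc (a ω, b ω, c ω) * mc (c ω)) ω))
          = ∑ ω, p ω * (mac (a ω, c ω) * mbc (b ω, c ω) / (mabc (a ω, b ω, c ω) * mc (c ω)))
          from rfl, e1]
      have step1 : ∑ t : A × B × C, mabc t * (mac (t.1, t.2.2) * mbc t.2 / (mabc t * mc t.2.2))
          ≤ ∑ t : A × B × C, (if mc t.2.2 = 0 then 0
              else mac (t.1, t.2.2) * mbc t.2 / mc t.2.2) := by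
        refine Finset.sum_le_sum fun t _ => ?_
        by_cases ht : mabc t = 0
        · rw [ht, zero_mul]
          split
          · exact le_rfl
          · exact div_nonneg (mul_nonneg (marg_nonneg p h0 _ _) (marg_nonneg p h0 _ _))
              (marg_nonneg p h0 _ _)
        · have hle : mabc t ≤ mc t.2.2 := by
            rw [hmabc, hmc]
            refine Finset.sum_le_sum fun ω _ => ?_
            split <;> rename_i hcond
            · rw [if_pos (by rw [← hcond])]
            · split
              · exact h0 ω
              · exact le_rfl
          have hmcne : mc t.2.2 ≠ 0 := by
            intro hz
            exact ht (le_antisymm (hz ▸ hle) (marg_nonneg p h0 _ _))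
          rw [if_neg hmcne]
          rw [show mabc t * (mac (t.1, t.2.2) * mbc t.2 / (mabc t * mc t.2.2))
              = mac (t.1, t.2.2) * mbc t.2 / mc t.2.2 by
            field_simp]
      refine le_trans step1 ?_
      rw [Fintype.sum_prod_type, Finset.sum_comm]
      calc ∑ bc : B × C, ∑ α : A, (if mc bc.2 = 0 then 0 else mac (α, bc.2) * mbc bc / mc bc.2)
          ≤ ∑ bc : B × C, mbc bc := by
            refine Finset.sum_le_sum fun bc _ => ?_
            by_cases hz : mc bc.2 = 0
            · simp only [hz, if_pos rfl]
              simp [marg_nonneg p h0 _ bc]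
              exact marg_nonneg p h0 (fun ω => (b ω, c ω)) bc
            · simp only [if_neg hz]
              have e2 : ∑ α : A, mac (α, bc.2) * mbc bc / mc bc.2
                  = (∑ α : A, mac (α, bc.2)) * mbc bc / mc bc.2 := by
                rw [← Finset.sum_div, ← Finset.sum_mul]
              rw [e2, hmac, sum_marg_fst p a c bc.2, ← hmc]
              rw [mul_comm, mul_div_assoc, div_self hz, mul_one]
        _ = 1 := by rw [hmbc, sum_marg, h1]
  unfold ent
  rw [sum_comp p c (fun s => Real.log (mc s)),
    sum_comp p (fun ω => (a ω, c ω)) (fun s => Real.log (mac s)),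
    sum_comp p (fun ω => (b ω, c ω)) (fun s => Real.log (mbc s)),
    sum_comp p (fun ω => (a ω, b ω, c ω)) (fun s => Real.log (mabc s))]
  linarith [hQlog, hPlog, main]

lemma ent_pair_eq (p : Ω → ℝ) (h0 : ∀ ω, 0 ≤ p ω)
    (g : Ω → S) (h : Ω → T) (R : S → T → ℝ)
    (hm : ∀ s t, marg p (fun ω => (g ω, h ω)) (s, t) = marg p g s * R s t) :
    ent (marg p (fun ω => (g ω, h ω)))
      = ent (marg p g) - ∑ ω, p ω * Real.log (R (g ω) (h ω)) := by
  rw [ent_eq p (fun ω => (g ω, h ω)), ent_eq p g]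
  have key : ∀ ω, p ω * Real.log (marg p (fun ω => (g ω, h ω)) (g ω, h ω))
      = p ω * Real.log (marg p g (g ω)) + p ω * Real.log (R (g ω) (h ω)) := by
    intro ω
    by_cases hω : p ω = 0
    · simp [hω]
    · have hpos : 0 < marg p (fun ω => (g ω, h ω)) (g ω, h ω) := marg_pos p h0 _ ω hω
      rw [hm (g ω) (h ω)] at hpos ⊢
      have h1' : marg p g (g ω) ≠ 0 := by
        intro hz; rw [hz, zero_mul] at hpos; exact lt_irrefl 0 hpos
      have h2' : R (g ω) (h ω) ≠ 0 := by
        intro hz; rw [hz, mul_zero] at hpos; exact lt_irrefl 0 hpos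
      rw [Real.log_mul h1' h2', mul_add]
  rw [show (∑ ω, p ω * Real.log (marg p (fun ω => (g ω, h ω)) ((fun ω => (g ω, h ω)) ω)))
      = ∑ ω, p ω * Real.log (marg p (fun ω => (g ω, h ω)) (g ω, h ω)) from rfl]
  rw [Finset.sum_congr rfl fun ω _ => key ω, Finset.sum_add_distrib]
  ring
end NonNeg

/-- If p(u,v2|x1,x2)=p(u|x1)p(v2|x2) and Y=f(U,V2) deterministically,
then I(X1,X2;Y|U) ≤ I(X2;V2). -/
theorem stmt0 {U X1 X2 V2 Y : Type*}
    [Fintype U] [Fintype X1] [Fintype X2] [Fintype V2] [Fintype Y]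
    [DecidableEq U] [DecidableEq X1] [DecidableEq X2] [DecidableEq V2] [DecidableEq Y]
    (q : X1 × X2 → ℝ) (hq0 : ∀ x, 0 ≤ q x) (hq1 : ∑ x, q x = 1)
    (pu : X1 → U → ℝ) (hpu0 : ∀ x u, 0 ≤ pu x u) (hpu1 : ∀ x, ∑ u, pu x u = 1)
    (pv : X2 → V2 → ℝ) (hpv0 : ∀ x v, 0 ≤ pv x v) (hpv1 : ∀ x, ∑ v, pv x v = 1)
    (f : U → V2 → Y)
    (p : U × X1 × X2 × V2 × Y → ℝ)
    (hp : ∀ u x1 x2 v y, p (u, x1, x2, v, y) =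
      q (x1, x2) * pu x1 u * pv x2 v * (if y = f u v then 1 else 0)) :
    CMI p (fun ω => (ω.2.1, ω.2.2.1)) (fun ω => ω.2.2.2.2) (fun ω => ω.1)
      ≤ MI p (fun ω => ω.2.2.1) (fun ω => ω.2.2.2.1) := by

  -- basic facts about p
  have hp0 : ∀ ω, 0 ≤ p ω := by
    rintro ⟨u, x1, x2, v, y⟩
    rw [hp]
    refine mul_nonneg (mul_nonneg (mul_nonneg (hq0 _) (hpu0 _ _)) (hpv0 _ _)) ?_
    split <;> norm_num
  have hsupp : ∀ ω : U × X1 × X2 × V2 × Y, p ω ≠ 0 → ω.2.2.2.2 = f ω.1 ω.2.2.2.1 := by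
    rintro ⟨u, x1, x2, v, y⟩ hne
    by_contra hy
    exact hne (by rw [hp]; simp [hy])
  have key : ∀ x2' : X2, (∑ u : U, ∑ x1' : X1, q (x1', x2') * pu x1' u)
      = ∑ x1' : X1, q (x1', x2') := by
    intro x2'
    rw [Finset.sum_comm]
    simp [← Finset.mul_sum, hpu1]
  -- marginal computations
  have hmAu : ∀ x1 x2 u0, marg p (fun ω => ((ω.2.1, ω.2.2.1), ω.1)) ((x1, x2), u0)
      = q (x1, x2) * pu x1 u0 := by
    intro x1 x2 u0
    unfold marg
    simp only [Fintype.sum_prod_type]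
    simp only [hp, Prod.mk.injEq, ite_and, mul_ite, mul_one, mul_zero]
    simp [Finset.sum_ite_eq, Finset.sum_ite_eq', ← Finset.mul_sum, hpv1]
  have hmAuv : ∀ x1 x2 u0 v0,
      marg p (fun ω => (((ω.2.1, ω.2.2.1), ω.1), ω.2.2.2.1)) (((x1, x2), u0), v0)
      = q (x1, x2) * pu x1 u0 * pv x2 v0 := by
    intro x1 x2 u0 v0
    unfold marg
    simp only [Fintype.sum_prod_type]
    simp only [hp, Prod.mk.injEq, ite_and, mul_ite, mul_one, mul_zero]
    simp [Finset.sum_ite_eq, Finset.sum_ite_eq', ← Finset.mul_sum, hpv1]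
  have hmX2 : ∀ x2, marg p (fun ω => ω.2.2.1) x2 = ∑ x1, q (x1, x2) := by
    intro x2
    unfold marg
    simp only [Fintype.sum_prod_type]
    simp only [hp, Prod.mk.injEq, ite_and, mul_ite, mul_one, mul_zero]
    simp [Finset.sum_ite_eq, Finset.sum_ite_eq', ← Finset.mul_sum, hpv1, key]
  have hmX2v : ∀ x2 v0, marg p (fun ω => (ω.2.2.1, ω.2.2.2.1)) (x2, v0)
      = (∑ x1, q (x1, x2)) * pv x2 v0 := by
    intro x2 v0
    unfold marg
    simp only [Fintype.sum_prod_type]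
    simp only [hp, Prod.mk.injEq, ite_and, mul_ite, mul_one, mul_zero]
    simp [Finset.sum_ite_eq, Finset.sum_ite_eq', ← Finset.mul_sum, hpv1]
    simp_rw [← Finset.sum_mul]
    rw [key]
  have hp1 : ∑ ω, p ω = 1 := by
    rw [← sum_marg p (fun ω => ω.2.2.1)]
    simp_rw [hmX2]
    rw [Finset.sum_comm, ← Fintype.sum_prod_type]
    exact hq1
  -- Step A: conditional mutual information is nonnegative
  have h_condMI :
      ent (marg p (fun ω => ((ω.2.1, ω.2.2.1), ω.2.2.2.1, (ω.2.2.2.2, ω.1))))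
        + ent (marg p (fun ω => (ω.2.2.2.2, ω.1)))
      ≤ ent (marg p (fun ω => ((ω.2.1, ω.2.2.1), (ω.2.2.2.2, ω.1))))
        + ent (marg p (fun ω => (ω.2.2.2.1, (ω.2.2.2.2, ω.1)))) :=
    condMI_nonneg p hp0 hp1 (fun ω => (ω.2.1, ω.2.2.1)) (fun ω => ω.2.2.2.1)
      (fun ω => (ω.2.2.2.2, ω.1))
  -- Step B1: drop the deterministic Y coordinate
  have h_B1 : ent (marg p (fun ω => (ω.2.2.2.1, (ω.2.2.2.2, ω.1))))
      = ent (marg p (fun ω => (ω.2.2.2.1, ω.1))) := by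
    apply ent_eq_of_inj p (fun ω => (ω.2.2.2.1, ω.1))
      (fun ω => (ω.2.2.2.1, (ω.2.2.2.2, ω.1)))
      (fun s => (s.1, (f s.2 s.1, s.2)))
    · intro s1 s2 h
      have h1 := congrArg Prod.fst h
      have h2 := congrArg (fun z => z.2.2) h
      simp at h1 h2
      exact Prod.ext h1 h2
    · intro ω hω
      rw [hsupp ω hω]
  -- Step B2: drop the deterministic Y coordinate (with X1,X2 attached)
  have h_B2 : ent (marg p (fun ω => ((ω.2.1, ω.2.2.1), ω.2.2.2.1, (ω.2.2.2.2, ω.1))))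
      = ent (marg p (fun ω => (((ω.2.1, ω.2.2.1), ω.1), ω.2.2.2.1))) := by
    apply ent_eq_of_inj p (fun ω => (((ω.2.1, ω.2.2.1), ω.1), ω.2.2.2.1))
      (fun ω => ((ω.2.1, ω.2.2.1), ω.2.2.2.1, (ω.2.2.2.2, ω.1)))
      (fun s => (s.1.1, (s.2, (f s.1.2 s.2, s.1.2))))
    · intro s1 s2 h
      have h1 := congrArg Prod.fst h
      have h2 := congrArg (fun z => z.2.1) h
      have h3 := congrArg (fun z => z.2.2.2) h
      simp at h1 h2 h3
      exact Prod.ext (Prod.ext h1 h3) h2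
    · intro ω hω
      rw [hsupp ω hω]
  -- Step C2: subadditivity for (V2, U)
  have h_MI : ent (marg p (fun ω => (ω.2.2.2.1, ω.1)))
      ≤ ent (marg p (fun ω => ω.2.2.2.1)) + ent (marg p (fun ω => ω.1)) :=
    MI_nonneg' p hp0 hp1 (fun ω => ω.2.2.2.1) (fun ω => ω.1)
  -- Step C1: conditional factorization of V2 given (X1,X2,U) resp. X2
  have h_L5a : ent (marg p (fun ω => (((ω.2.1, ω.2.2.1), ω.1), ω.2.2.2.1)))
      = ent (marg p (fun ω => ((ω.2.1, ω.2.2.1), ω.1)))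
        - ∑ ω, p ω * Real.log (pv ω.2.2.1 ω.2.2.2.1) := by
    refine ent_pair_eq p hp0 (fun ω => ((ω.2.1, ω.2.2.1), ω.1)) (fun ω => ω.2.2.2.1)
      (fun s t => pv s.1.2 t) ?_
    rintro ⟨⟨x1, x2⟩, u0⟩ v0
    rw [hmAuv x1 x2 u0 v0, hmAu x1 x2 u0]
  have h_L5b : ent (marg p (fun ω => (ω.2.2.1, ω.2.2.2.1)))
      = ent (marg p (fun ω => ω.2.2.1))
        - ∑ ω, p ω * Real.log (pv ω.2.2.1 ω.2.2.2.1) := by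
    refine ent_pair_eq p hp0 (fun ω => ω.2.2.1) (fun ω => ω.2.2.2.1)
      (fun s t => pv s t) ?_
    intro s t
    rw [hmX2v s t, hmX2 s]
  simp only [CMI, MI]
  linarith [h_condMI, h_B1, h_B2, h_MI, h_L5a, h_L5b]
end

section
/- For m ≥ 1, α ∈ [0,1], and γ_1,...,γ_m > 0, if μ > 0 satisfies (1/2)·Σ_{i=1}^m (√(γ_i(γ_i+4μ)) − γ_i) = 1−α, then μ ≤ (1−α)/m + ((1−α)²/m²)·(1/min_i γ_i), with equality if and only if γ_1 = ... = γ_m. -/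
open scoped BigOperators

/-- upper bound on the Lagrange multiplier μ. -/
theorem stmt3 (m : ℕ) (hm : 1 ≤ m) (α : ℝ) (hα : α ∈ Set.Icc (0:ℝ) 1)
    (γ : Fin m → ℝ) (hγ : ∀ i, 0 < γ i) (μ : ℝ) (hμ : 0 < μ)
    (heq : (1/2) * ∑ i, (Real.sqrt (γ i * (γ i + 4*μ)) - γ i) = 1 - α) :
    μ ≤ (1-α)/m + ((1-α)^2/(m:ℝ)^2) * (1 / ⨅ i, γ i)
    ∧ (μ = (1-α)/m + ((1-α)^2/(m:ℝ)^2) * (1 / ⨅ i, γ i) ↔ ∀ i j, γ i = γ j) := by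
  have hm0 : (0:ℝ) < (m:ℝ) := by exact_mod_cast hm
  haveI : Nonempty (Fin m) := ⟨⟨0, hm⟩⟩
  obtain ⟨s, hs⟩ : ∃ s : Fin m → ℝ,
      s = fun i => (1/2) * (Real.sqrt (γ i * (γ i + 4*μ)) - γ i) := ⟨_, rfl⟩
  have hspos : ∀ i, 0 < s i := by
    intro i
    have h1 : γ i < Real.sqrt (γ i * (γ i + 4*μ)) := by
      have h2 : γ i = Real.sqrt ((γ i)^2) := (Real.sqrt_sq (hγ i).le).symm
      rw [h2]
      apply Real.sqrt_lt_sqrt (by positivity)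
      nlinarith [hγ i]
    simp only [hs]
    nlinarith
  have hμeq : ∀ i, μ * γ i = s i * γ i + (s i)^2 := by
    intro i
    have hnn : (0:ℝ) ≤ γ i * (γ i + 4*μ) := by nlinarith [hγ i]
    have hsq : Real.sqrt (γ i * (γ i + 4*μ)) ^ 2 = γ i * (γ i + 4*μ) := Real.sq_sqrt hnn
    have h3 : Real.sqrt (γ i * (γ i + 4*μ)) = γ i + 2 * s i := by
      simp only [hs]; ring
    rw [h3] at hsq
    nlinarith [hsq]
  have hmono : ∀ i j, γ i ≤ γ j → s i ≤ s j := by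
    intro i j hij
    by_contra h
    push_neg at h
    have e1 : μ * γ i * γ j = s i * γ i * γ j + (s i)^2 * γ j := by
      linear_combination γ j * hμeq i
    have e2 : μ * γ i * γ j = s j * γ i * γ j + (s j)^2 * γ i := by
      linear_combination γ i * hμeq j
    have h3 : (s j)^2 < (s i)^2 := by nlinarith [hspos j, hspos i]
    nlinarith [e1, e2, mul_pos (sub_pos.mpr h) (mul_pos (hγ i) (hγ j)),
      mul_le_mul_of_nonneg_left hij (sq_nonneg (s i)),
      mul_lt_mul_of_pos_right h3 (hγ i)]
  have hseq : ∀ i j, s i = s j → γ i = γ j := by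
    intro i j hss
    have h0 : (μ - s i) * (γ i - γ j) = 0 := by
      linear_combination hμeq i - hμeq j + (γ j + s i + s j) * hss
    have h1 : 0 < μ - s i := by nlinarith [hμeq i, hγ i, hspos i]
    have := mul_eq_zero.mp h0
    rcases this with h | h
    · linarith
    · linarith
  obtain ⟨i0, hi0⟩ := Finite.exists_min γ
  have hinf : (⨅ i, γ i) = γ i0 :=
    le_antisymm (ciInf_le (Finite.bddBelow_range _) i0) (le_ciInf hi0)
  have hsum : ∑ i, s i = 1 - α := by
    simp only [hs]
    rw [← heq, Finset.mul_sum]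
  have hcpos : 0 < 1 - α := by
    rw [← hsum]
    exact Finset.sum_pos (fun i _ => hspos i) Finset.univ_nonempty
  have hsavg : s i0 ≤ (1 - α) / m := by
    rw [le_div_iff₀ hm0]
    have h1 : (m:ℝ) * s i0 = ∑ _i : Fin m, s i0 := by
      simp [mul_comm]
    have h2 : ∑ _i : Fin m, s i0 ≤ ∑ i, s i :=
      Finset.sum_le_sum (fun i _ => hmono i0 i (hi0 i))
    rw [hsum] at h2
    linarith [h1 ▸ h2]
  have hμdiv : μ = s i0 + (s i0)^2 / γ i0 := by
    have hdd : (s i0)^2 / γ i0 = μ - s i0 := by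
      rw [div_eq_iff (hγ i0).ne']
      linear_combination -hμeq i0
    linarith [hdd]
  have hRHS : (1-α)/m + ((1-α)^2/(m:ℝ)^2) * (1 / ⨅ i, γ i)
      = (1-α)/m + ((1-α)/m)^2 / γ i0 := by
    rw [hinf]
    field_simp
    all_goals ring
  have hbound : μ ≤ (1-α)/m + ((1-α)/m)^2 / γ i0 := by
    rw [hμdiv]
    have h1 : (s i0)^2 ≤ ((1-α)/m)^2 := by nlinarith [hspos i0]
    have h2 : (s i0)^2 / γ i0 ≤ ((1-α)/m)^2 / γ i0 :=
      (div_le_div_iff_of_pos_right (hγ i0)).mpr h1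
    linarith
  refine ⟨hRHS ▸ hbound, ?_, ?_⟩
  · intro hEq
    rw [hRHS] at hEq
    have hs0 : s i0 = (1-α)/m := by
      by_contra h
      have hlt : s i0 < (1-α)/m := lt_of_le_of_ne hsavg h
      have h1 : (s i0)^2 ≤ ((1-α)/m)^2 := by nlinarith [hspos i0]
      have h2 : (s i0)^2 / γ i0 ≤ ((1-α)/m)^2 / γ i0 :=
        (div_le_div_iff_of_pos_right (hγ i0)).mpr h1
      rw [hμdiv] at hEq
      linarith
    have hall : ∀ i, s i = s i0 := by
      have hz : ∑ i, (s i - s i0) = 0 := by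
        rw [Finset.sum_sub_distrib, hsum, Finset.sum_const, Finset.card_univ,
          Fintype.card_fin, hs0, nsmul_eq_mul]
        field_simp
        ring
      intro i
      have := (Finset.sum_eq_zero_iff_of_nonneg
        (fun j _ => sub_nonneg.mpr (hmono i0 j (hi0 j)))).mp hz i (Finset.mem_univ i)
      linarith
    intro i j
    exact hseq i j (by rw [hall i, hall j])
  · intro hall
    have hsconst : ∀ i, s i = s i0 := by
      intro i
      simp only [hs]
      rw [hall i i0]
    have hs0 : s i0 = (1-α)/m := by
      have h1 : ∑ i, s i = (m:ℝ) * s i0 := by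
        rw [Finset.sum_congr rfl (fun i _ => hsconst i)]
        simp [mul_comm]
      rw [hsum] at h1
      rw [eq_div_iff hm0.ne']
      linarith
    rw [hRHS, hμdiv, hs0]
end

section
/- For m ≥ 1, α ∈ [0,1], and γ_1,...,γ_m > 0, if μ > 0 satisfies (1/2)·Σ_{i=1}^m (√(γ_i(γ_i+4μ)) − γ_i) = 1−α, then μ ≥ (1−α)/m + ((1−α)²/m)·(1/Σ_i γ_i), with equality if and only if γ_1 = ... = γ_m. -/
open scoped BigOperators

private lemma sq_eq_of_nonneg {a b : ℝ} (ha : 0 ≤ a) (hb : 0 ≤ b) (h : a^2 = b^2) :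
    a = b := by nlinarith

private lemma aux_const {S μ M a : ℝ} (hμ : 0 < μ) (hM : 0 < M)
    (h : (S + 4*M*μ) * a = S * (a + 4*μ)) : a = S / M := by
  field_simp
  nlinarith

set_option maxHeartbeats 1000000 in
/-- lower bound on the Lagrange multiplier μ. -/
theorem stmt4 (m : ℕ) (hm : 1 ≤ m) (α : ℝ) (hα : α ∈ Set.Icc (0:ℝ) 1)
    (γ : Fin m → ℝ) (hγ : ∀ i, 0 < γ i) (μ : ℝ) (hμ : 0 < μ)
    (heq : (1/2) * ∑ i, (Real.sqrt (γ i * (γ i + 4*μ)) - γ i) = 1 - α) :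
    μ ≥ (1-α)/m + ((1-α)^2/(m:ℝ)) * (1 / ∑ i, γ i)
    ∧ (μ = (1-α)/m + ((1-α)^2/(m:ℝ)) * (1 / ∑ i, γ i) ↔ ∀ i j, γ i = γ j) := by
  obtain ⟨hα0, hα1⟩ := hα
  set t : ℝ := 1 - α with ht_def
  have ht : 0 ≤ t := by simp [ht_def]; linarith
  set S : ℝ := ∑ i, γ i with hS_def
  have hS : 0 < S := Finset.sum_pos (fun i _ => hγ i) (by
    simpa using Finset.univ_nonempty_iff.2 (Fin.pos_iff_nonempty.1 hm))
  have hmpos : (0:ℝ) < m := by exact_mod_cast hm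
  -- vectors in Euclidean space
  set x : EuclideanSpace ℝ (Fin m) := WithLp.toLp 2 (fun i => Real.sqrt (γ i)) with hx_def
  set y : EuclideanSpace ℝ (Fin m) := WithLp.toLp 2 (fun i => Real.sqrt (γ i + 4*μ)) with hy_def
  have hxi : ∀ i, x i = Real.sqrt (γ i) := fun i => by rw [hx_def]
  have hyi : ∀ i, y i = Real.sqrt (γ i + 4*μ) := fun i => by rw [hy_def]
  have hinner : (inner ℝ x y : ℝ) = ∑ i, Real.sqrt (γ i * (γ i + 4*μ)) := by
    simp only [PiLp.inner_apply, RCLike.inner_apply, starRingEnd_apply, star_trivial, PiLp.toLp_apply,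
      hx_def, hy_def]
    exact Finset.sum_congr rfl fun i _ => by
      rw [Real.sqrt_mul (hγ i).le, mul_comm]
  have hxx : (inner ℝ x x : ℝ) = S := by
    simp only [PiLp.inner_apply, RCLike.inner_apply, starRingEnd_apply, star_trivial, PiLp.toLp_apply, hx_def]
    exact Finset.sum_congr rfl fun i _ => Real.mul_self_sqrt (hγ i).le
  have hyy : (inner ℝ y y : ℝ) = S + 4*m*μ := by
    simp only [PiLp.inner_apply, RCLike.inner_apply, starRingEnd_apply, star_trivial, PiLp.toLp_apply, hy_def]
    rw [show S + 4*m*μ = ∑ _i : Fin m, (0:ℝ) + (S + 4*m*μ) by simp]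
    rw [Finset.sum_congr rfl fun i (_ : i ∈ Finset.univ) =>
      Real.mul_self_sqrt (by nlinarith [hγ i])]
    rw [Finset.sum_add_distrib, Finset.sum_const, hS_def]
    push_cast
    simp
    ring
  have hnx : ‖x‖ ^ 2 = S := by
    rw [← hxx, real_inner_self_eq_norm_sq]
  have hny : ‖y‖ ^ 2 = S + 4*m*μ := by
    rw [← hyy, real_inner_self_eq_norm_sq]
  -- the sum equals 2t + S
  have hA : ∑ i, Real.sqrt (γ i * (γ i + 4*μ)) = 2*t + S := by
    have := heq
    rw [Finset.sum_sub_distrib] at this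
    rw [ht_def, hS_def]; linarith
  have hAnn : (0:ℝ) ≤ 2*t + S := by linarith
  -- Cauchy-Schwarz
  have hCS : (inner ℝ x y : ℝ) ≤ ‖x‖ * ‖y‖ := real_inner_le_norm x y
  have hCS2 : (2*t + S)^2 ≤ S * (S + 4*m*μ) := by
    calc (2*t + S)^2 = (inner ℝ x y : ℝ)^2 := by rw [hinner, hA]
      _ ≤ (‖x‖ * ‖y‖)^2 := by
          apply sq_le_sq'
          · have h3 : (0:ℝ) ≤ ‖x‖ * ‖y‖ := mul_nonneg (norm_nonneg x) (norm_nonneg y)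
            have h2 : (0:ℝ) ≤ inner ℝ x y := by rw [hinner, hA]; exact hAnn
            linarith
          · exact hCS
      _ = S * (S + 4*m*μ) := by rw [mul_pow, hnx, hny]
  clear_value t S x y
  have hb : t/(m:ℝ) + t^2/(m:ℝ) * (1/S) = (t*S + t^2)/((m:ℝ)*S) := by
    field_simp
  constructor
  · rw [ge_iff_le, hb, div_le_iff₀ (by positivity)]
    nlinarith [hCS2]
  · -- equality case
    have key : μ = t/(m:ℝ) + (t^2/(m:ℝ)) * (1 / S) ↔ (2*t+S)^2 = S * (S+4*m*μ) := by
      rw [hb, eq_div_iff (by positivity : ((m:ℝ)*S) ≠ 0)]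
      constructor
      · intro h
        linear_combination (-4:ℝ) * h
      · intro h
        linear_combination (-1/4:ℝ) * h
    rw [key]
    clear hCS2 hb key heq hAnn
    constructor
    · intro h
      -- equality in Cauchy-Schwarz
      have hA2 : (inner ℝ x y : ℝ) = ‖x‖ * ‖y‖ := by
        apply sq_eq_of_nonneg
        · rw [hinner, hA]; linarith
        · exact mul_nonneg (norm_nonneg x) (norm_nonneg y)
        · rw [hinner, hA, h, mul_pow, hnx, hny]
      rw [inner_eq_norm_mul_iff_real] at hA2
      intro i j
      have hi := congrArg (fun v => v i) hA2
      have hj := congrArg (fun v => v j) hA2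
      simp only [PiLp.smul_apply, smul_eq_mul] at hi hj
      rw [hxi i, hyi i] at hi
      rw [hxi j, hyi j] at hj
      clear hA2 hA hinner hCS hxx hyy
      -- from ‖y‖ * √(γ k) = ‖x‖ * √(γ k + 4μ) derive γ k = S/m
      have sq : ∀ k : Fin m, ‖y‖ * Real.sqrt (γ k) = ‖x‖ * Real.sqrt (γ k + 4*μ) →
          γ k = S / m := by
        intro k hk
        have h1 : (‖y‖ * Real.sqrt (γ k))^2 = (‖x‖ * Real.sqrt (γ k + 4*μ))^2 := by rw [hk]
        rw [mul_pow, mul_pow, Real.sq_sqrt (hγ k).le,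
          Real.sq_sqrt (by nlinarith [hγ k] : (0:ℝ) ≤ γ k + 4*μ), hnx, hny] at h1
        exact aux_const hμ hmpos h1
      rw [sq i hi, sq j hj]
    · intro hconst
      -- all γ equal; show equality in Cauchy-Schwarz
      have hA2 : ‖y‖ • x = ‖x‖ • y := by
        ext i
        simp only [PiLp.smul_apply, smul_eq_mul]
        rw [hxi i, hyi i]
        have hxn : ‖x‖ = Real.sqrt m * Real.sqrt (γ i) := by
          apply sq_eq_of_nonneg (norm_nonneg x) (by positivity)
          rw [hnx, mul_pow, Real.sq_sqrt hmpos.le, Real.sq_sqrt (hγ i).le, hS_def]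
          rw [Finset.sum_congr rfl fun j (_ : j ∈ Finset.univ) => hconst j i]
          simp [mul_comm]
        have hyn : ‖y‖ = Real.sqrt m * Real.sqrt (γ i + 4*μ) := by
          apply sq_eq_of_nonneg (norm_nonneg y) (by positivity)
          rw [hny, mul_pow, Real.sq_sqrt hmpos.le,
            Real.sq_sqrt (by nlinarith [hγ i] : (0:ℝ) ≤ γ i + 4*μ), hS_def]
          rw [Finset.sum_congr rfl fun j (_ : j ∈ Finset.univ) => hconst j i]
          simp
          ring
        rw [hxn, hyn]; ring
      rw [← inner_eq_norm_mul_iff_real] at hA2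
      have h5 : (2*t+S)^2 = ((inner ℝ x y : ℝ))^2 := by rw [hinner, hA]
      rw [h5, hA2, mul_pow, hnx, hny]
end

section
/- For γ_1,...,γ_m > 0 and α_1,...,α_m > 0 with Σ_i α_i ≤ 1, it holds that Σ_{i=1}^m (1/2)·log(1 + γ_i/α_i) > (1/2)·log(1 + (Σ_{i=1}^m √γ_i)²) whenever m ≥ 2. -/
open scoped BigOperators

lemma aux_one_add_sum_le_prod {ι : Type*} (s : Finset ι) (x : ι → ℝ)
    (hx : ∀ i ∈ s, 0 ≤ x i) :
    1 + ∑ i ∈ s, x i ≤ ∏ i ∈ s, (1 + x i) := by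
  classical
  induction s using Finset.induction_on with
  | empty => simp
  | @insert j s hj ih =>
    rw [Finset.sum_insert hj, Finset.prod_insert hj]
    have hxj : 0 ≤ x j := hx j (Finset.mem_insert_self _ _)
    have ih' := ih (fun i hi => hx i (Finset.mem_insert_of_mem hi))
    have hsum : 0 ≤ ∑ i ∈ s, x i := Finset.sum_nonneg fun i hi =>
      hx i (Finset.mem_insert_of_mem hi)
    calc 1 + (x j + ∑ i ∈ s, x i) ≤ (1 + x j) * (1 + ∑ i ∈ s, x i) := by nlinarith
      _ ≤ (1 + x j) * ∏ i ∈ s, (1 + x i) := by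
          apply mul_le_mul_of_nonneg_left ih'; linarith

/-- for m ≥ 2, Σ (1/2)log(1+γ_i/α_i) > (1/2)log(1+(Σ√γ_i)²)
whenever α_i > 0 and Σα_i ≤ 1. -/
theorem stmt6 (m : ℕ) (hm : 2 ≤ m) (γ : Fin m → ℝ) (hγ : ∀ i, 0 < γ i)
    (a : Fin m → ℝ) (ha : ∀ i, 0 < a i) (hs : ∑ i, a i ≤ 1) :
    (1/2) * Real.log (1 + (∑ i, Real.sqrt (γ i))^2)
      < ∑ i, (1/2) * Real.log (1 + γ i / a i) := by
  classical
  set x : Fin m → ℝ := fun i => γ i / a i with hxdef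
  have hx : ∀ i, 0 < x i := fun i => div_pos (hγ i) (ha i)
  -- Cauchy-Schwarz: (∑ √γ)² ≤ (∑ x)(∑ a) ≤ ∑ x
  have hCS : (∑ i, Real.sqrt (γ i))^2 ≤ ∑ i, x i := by
    have h1 : (∑ i, Real.sqrt (x i) * Real.sqrt (a i))^2
        ≤ (∑ i, Real.sqrt (x i)^2) * ∑ i, Real.sqrt (a i)^2 :=
      Finset.sum_mul_sq_le_sq_mul_sq _ _ _
    have h2 : ∀ i : Fin m, Real.sqrt (x i) * Real.sqrt (a i) = Real.sqrt (γ i) := by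
      intro i
      rw [← Real.sqrt_mul (le_of_lt (hx i)), div_mul_cancel₀ _ (ne_of_gt (ha i))]
    have h3 : ∀ i : Fin m, Real.sqrt (x i)^2 = x i := fun i => Real.sq_sqrt (le_of_lt (hx i))
    have h4 : ∀ i : Fin m, Real.sqrt (a i)^2 = a i := fun i => Real.sq_sqrt (le_of_lt (ha i))
    simp_rw [h2, h3, h4] at h1
    have hxs : 0 ≤ ∑ i, x i := Finset.sum_nonneg fun i _ => le_of_lt (hx i)
    calc (∑ i, Real.sqrt (γ i))^2 ≤ (∑ i, x i) * ∑ i, a i := h1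
      _ ≤ (∑ i, x i) * 1 := mul_le_mul_of_nonneg_left hs hxs
      _ = ∑ i, x i := mul_one _
  -- strict: 1 + ∑ x < ∏ (1 + x)
  have hstrict : 1 + ∑ i, x i < ∏ i, (1 + x i) := by
    set i0 : Fin m := (⟨0, by omega⟩ : Fin m) with hi0
    have h0 : i0 ∈ Finset.univ := Finset.mem_univ _
    set s := (Finset.univ : Finset (Fin m)).erase i0 with hsdef
    have hne : s.Nonempty := by
      refine ⟨⟨1, by omega⟩, Finset.mem_erase.2 ⟨?_, Finset.mem_univ _⟩⟩
      intro h; rw [Fin.ext_iff, hi0] at h; simp at h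
    have hT : 0 < ∑ i ∈ s, x i :=
      Finset.sum_pos (fun i _ => hx i) hne
    have hprod : 1 + ∑ i ∈ s, x i ≤ ∏ i ∈ s, (1 + x i) :=
      aux_one_add_sum_le_prod s x (fun i _ => le_of_lt (hx i))
    have hsum0 : ∑ i, x i = x i0 + ∑ i ∈ s, x i := (Finset.add_sum_erase _ _ h0).symm
    have hprod0 : ∏ i, (1 + x i) = (1 + x i0) * ∏ i ∈ s, (1 + x i) :=
      (Finset.mul_prod_erase _ _ h0).symm
    rw [hsum0, hprod0]
    have hx0 := hx i0
    calc 1 + (x i0 + ∑ i ∈ s, x i) < (1 + x i0) * (1 + ∑ i ∈ s, x i) := by nlinarith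
      _ ≤ (1 + x i0) * ∏ i ∈ s, (1 + x i) := by
          apply mul_le_mul_of_nonneg_left hprod; linarith
  have hlog : Real.log (1 + (∑ i, Real.sqrt (γ i))^2) < ∑ i, Real.log (1 + x i) := by
    have hpos : 0 < 1 + (∑ i, Real.sqrt (γ i))^2 := by positivity
    have : Real.log (1 + (∑ i, Real.sqrt (γ i))^2) < Real.log (∏ i, (1 + x i)) := by
      apply Real.log_lt_log hpos
      calc 1 + (∑ i, Real.sqrt (γ i))^2 ≤ 1 + ∑ i, x i := by linarith
        _ < ∏ i, (1 + x i) := hstrict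
    rwa [Real.log_prod (fun i _ => by have := hx i; positivity)] at this
  calc (1/2) * Real.log (1 + (∑ i, Real.sqrt (γ i))^2)
      < (1/2) * ∑ i, Real.log (1 + x i) := by linarith
    _ = ∑ i, (1/2) * Real.log (1 + γ i / a i) := by rw [Finset.mul_sum]
end

section
/- Consider minimizing Σ_{i=1}^m log(1 + γ_i/α_i) over α_1,...,α_m > 0 subject to Σ_i α_i = 1−α, where α ∈ [0,1) and γ_i > 0. The minimizer is α_i* = (√(γ_i(γ_i+4μ)) − γ_i)/2 where μ > 0 is the unique solution of (1/2)·Σ_i (√(γ_i(γ_i+4μ)) − γ_i) = 1−α. -/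
open scoped BigOperators

/-- Tangent-line bound for the convex function `x ↦ log (1 + γ/x)` at the point `y`
satisfying `y (y + γ) = γ μ`. -/
lemma stmt14_key (γ μ x y : ℝ) (hγ : 0 < γ) (hμ : 0 < μ) (hx : 0 < x) (hy : 0 < y)
    (hyy : y * (y + γ) = γ * μ) :
    Real.log (1 + γ / y) - (x - y) / μ ≤ Real.log (1 + γ / x) := by
  have hxγ : 0 < x + γ := by linarith
  have hyγ : 0 < y + γ := by linarith
  have h1 : (1 : ℝ) + γ / y = (y + γ) / y := by field_simp
  have h2 : (1 : ℝ) + γ / x = (x + γ) / x := by field_simp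
  rw [h1, h2, sub_le_iff_le_add]
  have hratio : (0:ℝ) < ((y + γ) / y) / ((x + γ) / x) := by positivity
  have hlog : Real.log (((y + γ) / y) / ((x + γ) / x)) ≤ ((y + γ) / y) / ((x + γ) / x) - 1 :=
    Real.log_le_sub_one_of_pos hratio
  have hld : Real.log (((y + γ) / y) / ((x + γ) / x))
      = Real.log ((y + γ) / y) - Real.log ((x + γ) / x) := by
    apply Real.log_div (by positivity) (by positivity)
  have hbound : ((y + γ) / y) / ((x + γ) / x) - 1 ≤ (x - y) / μ := by
    have h3 : ((y + γ) / y) / ((x + γ) / x) - 1 = γ * (x - y) / (y * (x + γ)) := by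
      field_simp; ring
    rw [h3, div_le_div_iff₀ (by positivity) hμ]
    nlinarith [sq_nonneg (x - y), hy, hyy]
  linarith [hld ▸ hlog]

/-- optimal noise partitioning for the Gaussian MAC upper bounding model. -/
theorem stmt14 (m : ℕ) (hm : 1 ≤ m) (α : ℝ) (hα0 : 0 ≤ α) (hα1 : α < 1)
    (γ : Fin m → ℝ) (hγ : ∀ i, 0 < γ i) (μ : ℝ) (hμ : 0 < μ)
    (heq : (1/2) * ∑ i, (Real.sqrt (γ i * (γ i + 4*μ)) - γ i) = 1 - α) :
    (∀ i, 0 < (Real.sqrt (γ i * (γ i + 4*μ)) - γ i) / 2)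
    ∧ (∑ i, (Real.sqrt (γ i * (γ i + 4*μ)) - γ i) / 2 = 1 - α)
    ∧ (∀ a : Fin m → ℝ, (∀ i, 0 < a i) → ∑ i, a i = 1 - α →
        ∑ i, Real.log (1 + γ i / ((Real.sqrt (γ i * (γ i + 4*μ)) - γ i) / 2))
          ≤ ∑ i, Real.log (1 + γ i / a i)) := by
  set y : Fin m → ℝ := fun i => (Real.sqrt (γ i * (γ i + 4*μ)) - γ i) / 2 with hy
  have hs : ∀ i, (Real.sqrt (γ i * (γ i + 4*μ)))^2 = γ i * (γ i + 4*μ) := by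
    intro i
    exact Real.sq_sqrt (by nlinarith [hγ i])
  have hypos : ∀ i, 0 < y i := by
    intro i
    have : γ i < Real.sqrt (γ i * (γ i + 4*μ)) := by
      nlinarith [Real.sqrt_nonneg (γ i * (γ i + 4*μ)), hγ i, hs i, mul_pos (hγ i) hμ]
    simp only [hy]; linarith
  have hyy : ∀ i, y i * (y i + γ i) = γ i * μ := by
    intro i
    simp only [hy]
    nlinarith [hs i]
  have hsum : ∑ i, y i = 1 - α := by
    simp only [hy, div_eq_mul_inv, ← Finset.sum_mul]
    rw [← heq]; ring
  refine ⟨hypos, hsum, ?_⟩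
  intro a ha hasum
  have hkey : ∀ i ∈ Finset.univ, Real.log (1 + γ i / y i) - (a i - y i) / μ ≤
      Real.log (1 + γ i / a i) := by
    intro i _
    exact stmt14_key (γ i) μ (a i) (y i) (hγ i) hμ (ha i) (hypos i) (hyy i)
  have := Finset.sum_le_sum hkey
  rw [Finset.sum_sub_distrib] at this
  have hz : ∑ i, (a i - y i) / μ = 0 := by
    simp only [div_eq_mul_inv, ← Finset.sum_mul, Finset.sum_sub_distrib, hasum, hsum]
    ring
  simp only [hy] at this hz ⊢
  linarith
end
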